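/- Let δ be a smooth symmetric diagonal and α(u) = ∫₀ᵘ δ(t) dt. Then ∫₀¹ u·δ(u) du = α(1)/2 + 1/12 and ∫₀¹ α(u) du = α(1)/2 − 1/12. -/

import Mathlib

open MeasureTheory Set

noncomputable section

/-- A smooth symmetric diagonal `δ` with (continuous) derivative `δ'`:
continuous, strictly increasing, 2-Lipschitz, `δ(0)=0`, `δ(1)=1`, `δ(t) ≤ t`,
satisfying the symmetry identity `δ(u) = 2u - 1 + δ(1-u)`, differentiable with
continuous derivative, and `0 < δ'(u) < 2` for all but finitely many `u`. -/
def SmoothSymDiagonal (δ δ' : ℝ → ℝ) : Prop :=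
  ContinuousOn δ (Icc 0 1) ∧
  StrictMonoOn δ (Icc 0 1) ∧
  (∀ u ∈ Icc (0:ℝ) 1, ∀ v ∈ Icc (0:ℝ) 1, |δ u - δ v| ≤ 2 * |u - v|) ∧
  δ 0 = 0 ∧ δ 1 = 1 ∧
  (∀ t ∈ Icc (0:ℝ) 1, δ t ∈ Icc (0:ℝ) 1 ∧ δ t ≤ t) ∧
  (∀ u ∈ Icc (0:ℝ) 1, δ u = 2 * u - 1 + δ (1 - u)) ∧
  (∀ u ∈ Icc (0:ℝ) 1, HasDerivWithinAt δ (δ' u) (Icc 0 1) u) ∧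
  ContinuousOn δ' (Icc 0 1) ∧
  {u ∈ Icc (0:ℝ) 1 | ¬(0 < δ' u ∧ δ' u < 2)}.Finite

/-- `finv` is the inverse of the bijection `f : [0,1] → [0,1]`. -/
def InverseOnUnitInterval (f finv : ℝ → ℝ) : Prop :=
  (∀ t ∈ Icc (0:ℝ) 1, finv t ∈ Icc (0:ℝ) 1) ∧
  (∀ t ∈ Icc (0:ℝ) 1, f (finv t) = t) ∧
  (∀ t ∈ Icc (0:ℝ) 1, finv (f t) = t)


private theorem integral_identities_aux (δ : ℝ → ℝ)
    (hc : ContinuousOn δ (Icc 0 1))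
    (hsym : ∀ u ∈ Icc (0:ℝ) 1, δ u = 2 * u - 1 + δ (1 - u))
    (α : ℝ → ℝ) (hα : ∀ u : ℝ, α u = ∫ t in (0:ℝ)..u, δ t) :
    (∫ u in (0:ℝ)..1, u * δ u) = α 1 / 2 + 1/12 ∧
    (∫ u in (0:ℝ)..1, α u) = α 1 / 2 - 1/12 := by
  have huIcc : uIcc (0:ℝ) 1 = Icc 0 1 := uIcc_of_le zero_le_one
  have hci : ContinuousOn δ (uIcc (0:ℝ) 1) := huIcc ▸ hc
  have hintδ : IntervalIntegrable δ volume 0 1 := hci.intervalIntegrable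
  have hid : ContinuousOn (fun u : ℝ => u) (uIcc (0:ℝ) 1) := continuousOn_id
  have hintuδ : IntervalIntegrable (fun u => u * δ u) volume 0 1 :=
    (hid.mul hci).intervalIntegrable
  set I : ℝ := ∫ u in (0:ℝ)..1, u * δ u with hI
  set A : ℝ := ∫ u in (0:ℝ)..1, δ u with hA
  have hA1 : α 1 = A := hα 1
  -- reflection
  have hrefl : (∫ x in (0:ℝ)..1, (1 - x) * δ (1 - x)) = I := by
    have := intervalIntegral.integral_comp_sub_left (a := 0) (b := 1) (fun u : ℝ => u * δ u) 1
    simpa using this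
  have hcongr : (∫ x in (0:ℝ)..1, (1 - x) * δ (1 - x))
      = ∫ x in (0:ℝ)..1, ((δ x - x * δ x) + (1 - x) * (1 - 2 * x)) := by
    apply intervalIntegral.integral_congr
    intro x hx
    rw [huIcc] at hx
    have h := hsym x hx
    have h2 : δ (1 - x) = δ x - 2 * x + 1 := by linarith
    show (1 - x) * δ (1 - x) = δ x - x * δ x + (1 - x) * (1 - 2 * x)
    rw [h2]; ring
  have hint1 : IntervalIntegrable (fun x => δ x - x * δ x) volume 0 1 :=
    hintδ.sub hintuδ
  have hint2 : IntervalIntegrable (fun x : ℝ => (1 - x) * (1 - 2 * x)) volume 0 1 :=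
    (((continuous_const.sub continuous_id).mul
      (continuous_const.sub (continuous_const.mul continuous_id))).intervalIntegrable 0 1)
  have hpoly : (∫ x in (0:ℝ)..1, (1 - x) * (1 - 2 * x)) = 1/6 := by
    have : (fun x : ℝ => (1 - x) * (1 - 2 * x)) = fun x : ℝ => 2 * x ^ 2 - 3 * x + 1 := by
      funext x; ring
    rw [this]
    have i1 : IntervalIntegrable (fun x : ℝ => 2 * x ^ 2) volume 0 1 :=
      ((continuous_const.mul (continuous_pow 2)).intervalIntegrable 0 1)
    have i2 : IntervalIntegrable (fun x : ℝ => 3 * x) volume 0 1 :=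
      ((continuous_const.mul continuous_id).intervalIntegrable 0 1)
    have i3 : IntervalIntegrable (fun _ : ℝ => (1:ℝ)) volume 0 1 :=
      intervalIntegrable_const
    rw [intervalIntegral.integral_add (i1.sub i2) i3,
      intervalIntegral.integral_sub i1 i2,
      intervalIntegral.integral_const_mul, intervalIntegral.integral_const_mul]
    simp [integral_pow]
    norm_num
  have hIeq : I = A - I + 1/6 := by
    have h2 : (∫ x in (0:ℝ)..1, ((δ x - x * δ x) + (1 - x) * (1 - 2 * x)))
        = (∫ x in (0:ℝ)..1, (δ x - x * δ x)) + ∫ x in (0:ℝ)..1, (1 - x) * (1 - 2 * x) :=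
      intervalIntegral.integral_add hint1 hint2
    have h3 : (∫ x in (0:ℝ)..1, (δ x - x * δ x)) = A - I :=
      intervalIntegral.integral_sub hintδ hintuδ
    rw [hcongr, h2, h3, hpoly] at hrefl
    linarith
  have hfirst : I = α 1 / 2 + 1/12 := by rw [hA1]; linarith
  -- part 2: integration by parts
  have hαcont : ContinuousOn α (Icc 0 1) := by
    have : ContinuousOn (fun x : ℝ => ∫ t in (0:ℝ)..x, δ t) (uIcc (0:ℝ) 1) :=
      intervalIntegral.continuousOn_primitive_interval (by rw [huIcc]; exact hc.integrableOn_Icc)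
    rw [huIcc] at this
    exact this.congr (fun x _ => hα x)
  have hintα : IntervalIntegrable α volume 0 1 := (huIcc ▸ hαcont).intervalIntegrable
  have hF : ∀ x ∈ Ioo (0:ℝ) 1, HasDerivWithinAt (fun u => u * α u)
      (α x + x * δ x) (Ioi x) x := by
    intro x hx
    have hmem : Icc (0:ℝ) 1 ∈ nhds x := Icc_mem_nhds hx.1 hx.2
    have hδx : ContinuousAt δ x := hc.continuousAt hmem
    have hint0x : IntervalIntegrable δ volume 0 x := by
      apply hci.intervalIntegrable.mono_set
      rw [huIcc, uIcc_of_le (le_of_lt hx.1)]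
      exact Icc_subset_Icc le_rfl (le_of_lt hx.2)
    have hmeas : StronglyMeasurableAtFilter δ (nhds x) volume :=
      ⟨Icc 0 1, hmem, hc.aestronglyMeasurable measurableSet_Icc⟩
    have hα' : HasDerivAt (fun u => ∫ t in (0:ℝ)..u, δ t) (δ x) x :=
      intervalIntegral.integral_hasDerivAt_right hint0x hmeas hδx
    have hα'' : HasDerivAt α (δ x) x := by
      apply hα'.congr_of_eventuallyEq
      filter_upwards with u using hα u
    have : HasDerivAt (fun u : ℝ => u * α u) (α x + x * δ x) x := by
      have : HasDerivAt (fun u : ℝ => id u * α u) (1 * α x + id x * δ x) x := (hasDerivAt_id x).mul hα''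
      simp only [id_eq, one_mul] at this
      convert this using 1
    exact this.hasDerivWithinAt
  have hFc : ContinuousOn (fun u : ℝ => u * α u) (Icc 0 1) :=
    (continuousOn_id.mul hαcont)
  have hintsum : IntervalIntegrable (fun u => α u + u * δ u) volume 0 1 :=
    hintα.add hintuδ
  have hibp : (∫ u in (0:ℝ)..1, (α u + u * δ u)) = 1 * α 1 - 0 * α 0 :=
    intervalIntegral.integral_eq_sub_of_hasDeriv_right_of_le zero_le_one hFc hF hintsum
  have hsplit : (∫ u in (0:ℝ)..1, (α u + u * δ u))
      = (∫ u in (0:ℝ)..1, α u) + I := intervalIntegral.integral_add hintα hintuδ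
  constructor
  · exact hfirst
  · have : (∫ u in (0:ℝ)..1, α u) + I = α 1 := by
      rw [← hsplit, hibp]; ring
    linarith


theorem integral_identities_delta (δ δ' : ℝ → ℝ) (hδ : SmoothSymDiagonal δ δ')
    (α : ℝ → ℝ) (hα : ∀ u : ℝ, α u = ∫ t in (0:ℝ)..u, δ t) :
    (∫ u in (0:ℝ)..1, u * δ u) = α 1 / 2 + 1/12 ∧
    (∫ u in (0:ℝ)..1, α u) = α 1 / 2 - 1/12 := by
  obtain ⟨hc, -, -, -, -, -, hsym, -, -, -⟩ := hδ
  exact integral_identities_aux δ hc hsym α hα
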